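/- Let ℓ ≥ 1 and let P_ℓ denote the path with ℓ vertices. In the q-round Cops-and-Robber game with 2 cops on P_ℓ, Robber wins if and only if q ≤ ⌈(ℓ-1)/2⌉. -/

import Mathlib

/-- The path `P_ℓ` with `ℓ` vertices. -/
def pathGraphOn (ℓ : ℕ) : SimpleGraph (Fin ℓ) :=
  SimpleGraph.fromRel (fun a b => (a : ℕ) + 1 = (b : ℕ))

/-- `u` is reachable from `v` in `G` by a walk avoiding the vertex set `S`. -/
def avoidReach {V : Type*} (G : SimpleGraph V) (S : Finset V) (v u : V) : Prop :=
  Relation.ReflTransGen (fun a b => G.Adj a b ∧ a ∉ S ∧ b ∉ S) v u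

/-- `copWin G k q X v`: in the Cops-and-Robber game with `k` cops on `G`,
with cops on `X` and the robber on `v`, Cop (to move) can catch the robber
within `q` further rounds.  Each round Cop announces a new position `X'` of
size at most `k` adding at most one new vertex; Robber then moves within the
component of `G - (X ∩ X')` containing him; Robber is caught when his vertex
is occupied. -/
def copWin {V : Type*} [DecidableEq V] (G : SimpleGraph V) (k : ℕ) :
    ℕ → Finset V → V → Prop
  | 0, X, v => v ∈ X
  | (q + 1), X, v => v ∈ X ∨ ∃ X' : Finset V, X'.card ≤ k ∧ (X' \ X).card ≤ 1 ∧
      ∀ u, avoidReach G (X ∩ X') v u → copWin G k q X' u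

lemma copWin_zero {V : Type*} [DecidableEq V] (G : SimpleGraph V) (k : ℕ)
    (X : Finset V) (v : V) : copWin G k 0 X v ↔ v ∈ X := Iff.rfl

lemma copWin_succ {V : Type*} [DecidableEq V] (G : SimpleGraph V) (k q : ℕ)
    (X : Finset V) (v : V) : copWin G k (q+1) X v ↔
    (v ∈ X ∨ ∃ X' : Finset V, X'.card ≤ k ∧ (X' \ X).card ≤ 1 ∧
      ∀ u, avoidReach G (X ∩ X') v u → copWin G k q X' u) := Iff.rfl

lemma path_adj {L : ℕ} {x y : Fin L} :
    (pathGraphOn L).Adj x y ↔ ((x:ℕ)+1 = y ∨ (y:ℕ)+1 = x) := by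
  constructor
  · rintro ⟨-, h⟩; exact h
  · intro h
    refine ⟨?_, h⟩
    intro he; subst he; omega

lemma reach_symmrel {L : ℕ} (S : Finset (Fin L)) :
    Symmetric (fun a b => (pathGraphOn L).Adj a b ∧ a ∉ S ∧ b ∉ S) := by
  rintro a b ⟨h1, h2, h3⟩; exact ⟨h1.symm, h3, h2⟩

lemma reach_interval_aux {L : ℕ} {S : Finset (Fin L)} {p r : ℕ}
    (hfree : ∀ x ∈ S, (x:ℕ) < p ∨ r < (x:ℕ)) (_hr : r < L) :
    ∀ n (v u : Fin L), (u:ℕ) = (v:ℕ) + n → p ≤ (v:ℕ) → (u:ℕ) ≤ r →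
      avoidReach (pathGraphOn L) S v u := by
  intro n
  induction n with
  | zero =>
    intro v u h _ _
    have : u = v := Fin.ext (by omega)
    subst this; exact Relation.ReflTransGen.refl
  | succ n ih =>
    intro v u h hpv hur
    have hvL : (v:ℕ) + 1 < L := by have := u.isLt; omega
    set v' : Fin L := ⟨(v:ℕ)+1, hvL⟩ with hv'
    have hvS : v ∉ S := by
      intro hm; rcases hfree v hm with h' | h' <;> omega
    have hv'S : v' ∉ S := by
      intro hm; rcases hfree v' hm with h' | h' <;> simp [hv'] at h' <;> omega
    refine Relation.ReflTransGen.head ⟨?_, hvS, hv'S⟩ (ih v' u (by simp [hv']; omega) (by simp [hv']; omega) hur)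
    rw [path_adj]; left; simp [hv']

lemma reach_interval {L : ℕ} {S : Finset (Fin L)} {p r : ℕ}
    (hfree : ∀ x ∈ S, (x:ℕ) < p ∨ r < (x:ℕ)) (hr : r < L) {v u : Fin L}
    (h1 : p ≤ (v:ℕ)) (h2 : (v:ℕ) ≤ r) (h3 : p ≤ (u:ℕ)) (h4 : (u:ℕ) ≤ r) :
    avoidReach (pathGraphOn L) S v u := by
  rcases le_total (v:ℕ) (u:ℕ) with h | h
  · exact reach_interval_aux hfree hr ((u:ℕ) - (v:ℕ)) v u (by omega) h1 h4
  · exact (@Relation.ReflTransGen.stdSymm _ _ ⟨fun a b h => reach_symmrel S h⟩).symm _ _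
      (reach_interval_aux hfree hr ((v:ℕ) - (u:ℕ)) u v (by omega) h3 h2)

lemma reach_gt {L : ℕ} {S : Finset (Fin L)} {j : Fin L} (hj : j ∈ S) {v u : Fin L}
    (h : avoidReach (pathGraphOn L) S v u) (hv : (j:ℕ) < (v:ℕ)) : (j:ℕ) < (u:ℕ) := by
  induction h with
  | refl => exact hv
  | @tail b c h' step ih =>
    obtain ⟨hadj, hb, hc⟩ := step
    rw [path_adj] at hadj
    have hne : c ≠ j := fun he => hc (he ▸ hj)
    have hne' : (c : ℕ) ≠ (j : ℕ) := fun he => hne (Fin.ext he)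
    omega

lemma reach_lt {L : ℕ} {S : Finset (Fin L)} {j : Fin L} (hj : j ∈ S) {v u : Fin L}
    (h : avoidReach (pathGraphOn L) S v u) (hv : (v:ℕ) < (j:ℕ)) : (u:ℕ) < (j:ℕ) := by
  induction h with
  | refl => exact hv
  | @tail b c h' step ih =>
    obtain ⟨hadj, hb, hc⟩ := step
    rw [path_adj] at hadj
    have hne : c ≠ j := fun he => hc (he ▸ hj)
    have hne' : (c : ℕ) ≠ (j : ℕ) := fun he => hne (Fin.ext he)
    omega

lemma extend_left {L : ℕ} (S : Finset (Fin L)) (b : ℕ) :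
    ∀ a, (∀ x ∈ S, (x:ℕ) < a ∨ b < (x:ℕ)) →
      ∃ p, p ≤ a ∧ (∀ x ∈ S, (x:ℕ) < p ∨ b < (x:ℕ)) ∧
        (p = 0 ∨ ∃ s ∈ S, (s:ℕ) + 1 = p) := by
  intro a
  induction a with
  | zero => exact fun h => ⟨0, le_refl _, h, Or.inl rfl⟩
  | succ n ih =>
    intro h
    by_cases hs : ∃ s ∈ S, (s:ℕ) + 1 = n + 1
    · exact ⟨n+1, le_refl _, h, Or.inr hs⟩
    · have h' : ∀ x ∈ S, (x:ℕ) < n ∨ b < (x:ℕ) := by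
        intro x hx
        rcases h x hx with h1 | h1
        · have : (x:ℕ) ≠ n := fun he => hs ⟨x, hx, by omega⟩
          left; omega
        · right; exact h1
      obtain ⟨p, hp1, hp2, hp3⟩ := ih h'
      exact ⟨p, by omega, hp2, hp3⟩

lemma extend_right {L : ℕ} (S : Finset (Fin L)) (p : ℕ) :
    ∀ k b, L - 1 - b ≤ k → b < L → (∀ x ∈ S, (x:ℕ) < p ∨ b < (x:ℕ)) →
      ∃ r, b ≤ r ∧ r < L ∧ (∀ x ∈ S, (x:ℕ) < p ∨ r < (x:ℕ)) ∧
        (r = L - 1 ∨ ∃ s ∈ S, (s:ℕ) = r + 1) := by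
  intro k
  induction k with
  | zero =>
    intro b hk hb h
    exact ⟨b, le_refl _, hb, h, Or.inl (by omega)⟩
  | succ n ih =>
    intro b hk hb h
    by_cases hend : b = L - 1
    · exact ⟨b, le_refl _, hb, h, Or.inl hend⟩
    by_cases hs : ∃ s ∈ S, (s:ℕ) = b + 1
    · exact ⟨b, le_refl _, hb, h, Or.inr hs⟩
    · have h' : ∀ x ∈ S, (x:ℕ) < p ∨ b + 1 < (x:ℕ) := by
        intro x hx
        rcases h x hx with h1 | h1
        · left; exact h1
        · have : (x:ℕ) ≠ b + 1 := fun he => hs ⟨x, hx, he⟩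
          right; omega
      obtain ⟨r, hr1, hr2, hr3, hr4⟩ := ih (b+1) (by omega) (by omega) h'
      exact ⟨r, by omega, hr2, hr3, hr4⟩

lemma copWin_of_mem {V : Type*} [DecidableEq V] {G : SimpleGraph V} {k q : ℕ}
    {X : Finset V} {v : V} (h : v ∈ X) : copWin G k q X v := by
  cases q with
  | zero => exact h
  | succ n => exact Or.inl h

lemma copWin_succ_of {V : Type*} [DecidableEq V] {G : SimpleGraph V} {k : ℕ} :
    ∀ {q : ℕ} {X : Finset V} {v : V}, copWin G k q X v → copWin G k (q+1) X v := by
  intro q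
  induction q with
  | zero => intro X v h; exact Or.inl h
  | succ n ih =>
    intro X v h
    rcases h with h | ⟨X', h1, h2, h3⟩
    · exact Or.inl h
    · exact Or.inr ⟨X', h1, h2, fun u hu => ih (h3 u hu)⟩

lemma copWin_mono {V : Type*} [DecidableEq V] {G : SimpleGraph V} {k : ℕ}
    {q q' : ℕ} (h : q ≤ q') {X : Finset V} {v : V}
    (hw : copWin G k q X v) : copWin G k q' X v := by
  induction q' with
  | zero =>
    have : q = 0 := by omega
    exact this ▸ hw
  | succ n ih =>
    rcases Nat.lt_or_ge q (n+1) with h' | h'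
    · exact copWin_succ_of (ih (by omega))
    · have : q = n + 1 := by omega
      exact this ▸ hw

lemma sweepR {L : ℕ} : ∀ (q : ℕ) (X : Finset (Fin L)) (v j : Fin L),
    j ∈ X → (j:ℕ) < (v:ℕ) → L - 1 - (j:ℕ) ≤ q → copWin (pathGraphOn L) 2 q X v := by
  intro q
  induction q with
  | zero =>
    intro X v j _ h1 h2
    have := v.isLt
    omega
  | succ n ih =>
    intro X v j hjX h1 h2
    have hjL : (j:ℕ) + 1 < L := by have := v.isLt; omega
    set j' : Fin L := ⟨(j:ℕ)+1, hjL⟩ with hj'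
    set X' : Finset (Fin L) := {j, j'} with hX'
    refine Or.inr ⟨X', ?_, ?_, ?_⟩
    · exact (Finset.card_insert_le _ _).trans (by simp)
    · refine (Finset.card_le_card ?_).trans (Finset.card_singleton j').le
      intro x hx
      rw [Finset.mem_sdiff, hX', Finset.mem_insert, Finset.mem_singleton] at hx
      rcases hx.1 with h | h
      · exact absurd (h ▸ hjX) hx.2
      · simp [h]
    · intro u hu
      have hjS : j ∈ X ∩ X' := Finset.mem_inter.mpr ⟨hjX, by simp [hX']⟩
      have hju : (j:ℕ) < (u:ℕ) := reach_gt hjS hu h1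
      rcases Nat.lt_or_ge ((j:ℕ)+1) (u:ℕ) with h | h
      · exact ih X' u j' (by simp [hX']) (by simpa [hj'] using h)
          (by simp [hj']; have := u.isLt; omega)
      · have : u = j' := Fin.ext (by simp [hj']; omega)
        exact copWin_of_mem (by simp [this, hX'])

lemma sweepL {L : ℕ} : ∀ (q : ℕ) (X : Finset (Fin L)) (v j : Fin L),
    j ∈ X → (v:ℕ) < (j:ℕ) → (j:ℕ) ≤ q → copWin (pathGraphOn L) 2 q X v := by
  intro q
  induction q with
  | zero => intro X v j _ h1 h2; omega
  | succ n ih =>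
    intro X v j hjX h1 h2
    have hjL : (j:ℕ) - 1 < L := by have := j.isLt; omega
    set j' : Fin L := ⟨(j:ℕ)-1, hjL⟩ with hj'
    set X' : Finset (Fin L) := {j, j'} with hX'
    refine Or.inr ⟨X', ?_, ?_, ?_⟩
    · exact (Finset.card_insert_le _ _).trans (by simp)
    · refine (Finset.card_le_card ?_).trans (Finset.card_singleton j').le
      intro x hx
      rw [Finset.mem_sdiff, hX', Finset.mem_insert, Finset.mem_singleton] at hx
      rcases hx.1 with h | h
      · exact absurd (h ▸ hjX) hx.2
      · simp [h]
    · intro u hu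
      have hjS : j ∈ X ∩ X' := Finset.mem_inter.mpr ⟨hjX, by simp [hX']⟩
      have hju : (u:ℕ) < (j:ℕ) := reach_lt hjS hu h1
      rcases Nat.lt_or_ge (u:ℕ) ((j:ℕ)-1) with h | h
      · exact ih X' u j' (by simp [hX']) (by simpa [hj'] using h) (by simp [hj']; omega)
      · have : u = j' := Fin.ext (by simp [hj']; omega)
        exact copWin_of_mem (by simp [this, hX'])

lemma cop_start {L : ℕ} (hL : 1 ≤ L) (q : ℕ) (hq : L / 2 + 1 ≤ q) (v : Fin L) :
    copWin (pathGraphOn L) 2 q ∅ v := by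
  refine copWin_mono hq ?_
  set m : Fin L := ⟨(L-1)/2, by omega⟩ with hm
  refine Or.inr ⟨{m}, by simp, by simp, ?_⟩
  intro u _
  rcases Nat.lt_trichotomy (u:ℕ) ((m:ℕ)) with h | h | h
  · exact sweepL (L/2) {m} u m (by simp) h (by simp [hm]; omega)
  · exact copWin_of_mem (by simp [Fin.ext h])
  · exact sweepR (L/2) {m} u m (by simp) h (by simp [hm]; omega)

lemma robber_surv {L : ℕ} : ∀ (q : ℕ) (X : Finset (Fin L)) (v : Fin L) (a b : ℕ),
    a ≤ (v:ℕ) → (v:ℕ) ≤ b → b < L → (∀ x ∈ X, (x:ℕ) < a ∨ b < (x:ℕ)) →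
    a + q + 1 ≤ L → q ≤ b → 2 * q ≤ L → ¬ copWin (pathGraphOn L) 2 q X v := by
  intro q
  induction q with
  | zero =>
    intro X v a b h1 h2 h3 hfree h4 h5 h6 hwin
    rcases hfree v hwin with h | h <;> omega
  | succ q ih =>
    intro X v a b h1 h2 h3 hfree h4 h5 h6 hwin
    rcases hwin with hv | ⟨X', hc, hd, hall⟩
    · rcases hfree v hv with h | h <;> omega
    set S := X ∩ X' with hS
    have hSfree : ∀ x ∈ S, (x:ℕ) < a ∨ b < (x:ℕ) :=
      fun x hx => hfree x (Finset.mem_inter.mp hx).1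
    obtain ⟨p, hpa, hpfree, hpmax⟩ := extend_left S b a hSfree
    obtain ⟨r, hbr, hrL, hrfree, hrmax⟩ := extend_right S p (L - 1 - b) b (le_refl _) h3 hpfree
    have hreach : ∀ u : Fin L, p ≤ (u:ℕ) → (u:ℕ) ≤ r → avoidReach (pathGraphOn L) S v u :=
      fun u hu1 hu2 => reach_interval hrfree hrL (by omega) (by omega) hu1 hu2
    by_cases hw : ∃ w ∈ X', p ≤ (w:ℕ) ∧ (w:ℕ) ≤ r
    · obtain ⟨w, hwX', hpw, hwr⟩ := hw
      have hnotX : ∀ x ∈ X', p ≤ (x:ℕ) → (x:ℕ) ≤ r → x ∉ X := by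
        intro x hx hx1 hx2 hxX
        rcases hrfree x (Finset.mem_inter.mpr ⟨hxX, hx⟩) with h | h <;> omega
      have huniq : ∀ x ∈ X', p ≤ (x:ℕ) → (x:ℕ) ≤ r → x = w := by
        intro x hx hx1 hx2
        have hx' : x ∈ X' \ X := Finset.mem_sdiff.mpr ⟨hx, hnotX x hx hx1 hx2⟩
        have hw' : w ∈ X' \ X := Finset.mem_sdiff.mpr ⟨hwX', hnotX w hwX' hpw hwr⟩
        exact Finset.card_le_one.mp hd x hx' w hw'
      by_cases hB : (w:ℕ) < r ∧ (w:ℕ) + q + 2 ≤ L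
      · -- move right of w
        set u : Fin L := ⟨(w:ℕ)+1, by omega⟩ with hu
        refine ih X' u ((w:ℕ)+1) r (by simp [hu]) (by simp [hu]; omega) hrL ?_
          (by omega) (by omega) (by omega) (hall u (hreach u (by simp [hu]; omega) (by simp [hu]; omega)))
        intro x hx
        rcases Nat.lt_or_ge (x:ℕ) ((w:ℕ)+1) with h | h
        · rcases Nat.lt_or_ge (x:ℕ) p with h' | h'
          · left; omega
          · have := huniq x hx h' (by omega); subst this; omega
        · rcases Nat.lt_or_ge r (x:ℕ) with h' | h'
          · right; exact h'
          · have := huniq x hx (by omega) h'; subst this; omega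
      · -- move left of w
        have hkey : q + 1 ≤ (w:ℕ) ∧ p < (w:ℕ) := by
          rcases not_and_or.mp hB with h | h
          · -- w = r
            have hwr' : (w:ℕ) = r := by omega
            constructor
            · omega
            · by_contra hpw'
              have hpr : p = r := by omega
              have hab : a = b := by omega
              have hp0 : p ≠ 0 := by omega
              rcases hpmax with h' | ⟨s1, hs1S, hs1⟩
              · omega
              rcases hrmax with h' | ⟨s2, hs2S, hs2⟩
              · omega
              have hs1X' : s1 ∈ X' := (Finset.mem_inter.mp hs1S).2
              have hs2X' : s2 ∈ X' := (Finset.mem_inter.mp hs2S).2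
              have hsub : ({s1, s2, w} : Finset (Fin L)) ⊆ X' := by
                intro x hx
                simp only [Finset.mem_insert, Finset.mem_singleton] at hx
                rcases hx with h' | h' | h' <;> subst h' <;> assumption
              have h12 : s1 ≠ s2 := fun he => by
                have : (s1:ℕ) = (s2:ℕ) := congrArg Fin.val he
                omega
              have h1w : s1 ≠ w := fun he => by
                have : (s1:ℕ) = (w:ℕ) := congrArg Fin.val he
                omega
              have h2w : s2 ≠ w := fun he => by
                have : (s2:ℕ) = (w:ℕ) := congrArg Fin.val he
                omega
              have hcard : ({s1, s2, w} : Finset (Fin L)).card = 3 := by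
                rw [Finset.card_insert_of_notMem (by simp [h12, h1w]),
                  Finset.card_insert_of_notMem (by simp [h2w]), Finset.card_singleton]
              have := Finset.card_le_card hsub
              omega
          · -- w + q + 2 > L
            constructor <;> omega
        obtain ⟨hq1w, hpw'⟩ := hkey
        have hwL : (w:ℕ) - 1 < L := by omega
        set u : Fin L := ⟨(w:ℕ)-1, hwL⟩ with hu
        have huval : (u:ℕ) = (w:ℕ) - 1 := rfl
        refine ih X' u p ((w:ℕ)-1) (by omega) (by omega) (by omega) ?_
          (by omega) (by omega) (by omega)
          (hall u (hreach u (by omega) (by omega)))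
        intro x hx
        rcases Nat.lt_or_ge (x:ℕ) p with h' | h'
        · left; exact h'
        · rcases Nat.lt_or_ge r (x:ℕ) with h'' | h''
          · right; omega
          · have := huniq x hx h' h''; subst this; right; omega
    · -- no new cop in [p, r]
      push_neg at hw
      refine ih X' v p r (by omega) (by omega) hrL ?_ (by omega) (by omega) (by omega)
        (hall v Relation.ReflTransGen.refl)
      intro x hx
      rcases Nat.lt_or_ge (x:ℕ) p with h' | h'
      · left; exact h'
      · right
        have := hw x hx h'
        omega

/-- On the path with `ℓ ≥ 1` vertices, Robber wins the `q`-round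
Cops-and-Robber game against 2 cops iff `q ≤ ⌈(ℓ-1)/2⌉`. -/
theorem robber_wins_path_iff (ℓ : ℕ) (hℓ : 1 ≤ ℓ) (q : ℕ) :
    (∃ v : Fin ℓ, ¬ copWin (pathGraphOn ℓ) 2 q ∅ v) ↔ q ≤ ((ℓ - 1) + 1) / 2 := by
  constructor
  · intro ⟨v, hv⟩
    by_contra hq
    exact hv (cop_start hℓ q (by omega) v)
  · intro hq
    have h2q : 2 * q ≤ ℓ := by omega
    refine ⟨⟨0, hℓ⟩, robber_surv q ∅ ⟨0, hℓ⟩ 0 (ℓ - 1) (by omega) (by simp) (by omega)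
      (by simp) (by omega) (by omega) h2q⟩
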